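/- Let α, β ∈ ℝ with (α, β) ≠ (0, 0), let v ∈ ℝ with v ≠ 0, and let ε > 0 and Δt > 0. Set λ = −α − i(β/v) ∈ ℂ and τ = 1 + ε·λ. Then |τ − (1 − ε/Δt)| ≤ ε/Δt if and only if Δt ≤ 2αv²/(α²v² + β²). -/

import Mathlib

open Complex

/-- CFL-like bound for projective forward Euler applied to the relaxation
system: the dominant amplification factor `τ = 1 + ελ` with `λ = −α − iβ/v`
lies in the slow stability disk `D(1 − ε/Δt, ε/Δt)` if and only if
`Δt ≤ 2αv²/(α²v² + β²)`. -/
theorem pfe_slow_disk_iff_cfl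
    (α β v : ℝ) (hαβ : ¬(α = 0 ∧ β = 0)) (hv : v ≠ 0)
    (ε Δt : ℝ) (hε : 0 < ε) (hΔt : 0 < Δt) :
    ‖((1 + (ε : ℂ) * (-(α : ℂ) - Complex.I * ((β : ℂ) / (v : ℂ))))
        - ((1 - ε / Δt : ℝ) : ℂ))‖ ≤ ε / Δt ↔
      Δt ≤ 2 * α * v ^ 2 / (α ^ 2 * v ^ 2 + β ^ 2) := by
  have hv2 : (0:ℝ) < v ^ 2 := by positivity
  have hden : (0:ℝ) < α ^ 2 * v ^ 2 + β ^ 2 := by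
    rcases not_and_or.mp hαβ with h | h
    · have : α ^ 2 > 0 := by positivity
      nlinarith [sq_nonneg β]
    · have : β ^ 2 > 0 := by positivity
      nlinarith [sq_nonneg (α * v)]
  have hεΔ : (0:ℝ) < ε / Δt := div_pos hε hΔt
  have heq : (1 + (ε : ℂ) * (-(α : ℂ) - Complex.I * ((β : ℂ) / (v : ℂ))))
        - ((1 - ε / Δt : ℝ) : ℂ)
      = ((ε / Δt - ε * α : ℝ) : ℂ) + ((-(ε * β / v) : ℝ) : ℂ) * Complex.I := by
    have hvC : (v : ℂ) ≠ 0 := by exact_mod_cast hv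
    have hΔC : (Δt : ℂ) ≠ 0 := by exact_mod_cast hΔt.ne'
    push_cast
    field_simp
    ring
  rw [heq, Complex.norm_add_mul_I]
  have hsq : Real.sqrt ((ε / Δt - ε * α) ^ 2 + (-(ε * β / v)) ^ 2) ≤ ε / Δt ↔
      (ε / Δt - ε * α) ^ 2 + (-(ε * β / v)) ^ 2 ≤ (ε / Δt) ^ 2 := by
    rw [show (ε / Δt) ^ 2 = Real.sqrt ((ε / Δt) ^ 2) ^ 2 from
      (Real.sq_sqrt (by positivity)).symm, Real.sqrt_sq hεΔ.le,
      ← Real.sqrt_sq hεΔ.le, Real.sqrt_le_sqrt_iff (by positivity),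
      Real.sq_sqrt (by positivity)]
  rw [hsq, le_div_iff₀ hden]
  have hfac : (ε / Δt) ^ 2 - ((ε / Δt - ε * α) ^ 2 + (-(ε * β / v)) ^ 2)
      = (ε ^ 2 / (Δt ^ 2 * v ^ 2)) * (Δt * (2 * α * v ^ 2 - Δt * (α ^ 2 * v ^ 2 + β ^ 2))) := by
    field_simp
    ring
  have hc : (0:ℝ) < ε ^ 2 / (Δt ^ 2 * v ^ 2) := by positivity
  constructor
  · intro h
    have h0 : 0 ≤ (ε ^ 2 / (Δt ^ 2 * v ^ 2)) * (Δt * (2 * α * v ^ 2 - Δt * (α ^ 2 * v ^ 2 + β ^ 2))) := by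
      rw [← hfac]; linarith
    have h1 : 0 ≤ Δt * (2 * α * v ^ 2 - Δt * (α ^ 2 * v ^ 2 + β ^ 2)) :=
      nonneg_of_mul_nonneg_right h0 hc
    nlinarith
  · intro h
    have h1 : 0 ≤ (ε ^ 2 / (Δt ^ 2 * v ^ 2)) * (Δt * (2 * α * v ^ 2 - Δt * (α ^ 2 * v ^ 2 + β ^ 2))) := by
      have : 0 ≤ 2 * α * v ^ 2 - Δt * (α ^ 2 * v ^ 2 + β ^ 2) := by linarith
      positivity
    nlinarith [hfac]
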